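/- Let m be a natural number and n : ℕ → ℕ any function. Let I be the ideal of the polynomial ring ℂ[x,y] generated by the monomials x^{n(i)} y^i for 0 ≤ i < m together with y^m. Then the ℂ-vector space dimension of the quotient ℂ[x,y]/I is at most ∑_{i<m} n(i); in particular this quotient is finite-dimensional over ℂ. -/

import Mathlib

open MvPolynomial

/-- The variable `x` in `ℂ[x,y]`. -/
noncomputable def Px : MvPolynomial (Fin 2) ℂ := X 0

/-- The variable `y` in `ℂ[x,y]`. -/
noncomputable def Py : MvPolynomial (Fin 2) ℂ := X 1

/-- if `I ⊆ ℂ[x,y]` is the ideal generated by the monomials `x^{n(i)} y^i`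
for `0 ≤ i < m` together with `y^m`, then `dim_ℂ ℂ[x,y]/I ≤ ∑_{i<m} n(i)`; in particular
the quotient is finite-dimensional over `ℂ`. -/
theorem stmt2 (m : ℕ) (n : ℕ → ℕ)
    (I : Ideal (MvPolynomial (Fin 2) ℂ))
    (hI : I = Ideal.span
      (insert (Py ^ m) ((fun i : ℕ => Px ^ n i * Py ^ i) '' Set.Iio m))) :
    FiniteDimensional ℂ (MvPolynomial (Fin 2) ℂ ⧸ I) ∧
    Module.finrank ℂ (MvPolynomial (Fin 2) ℂ ⧸ I) ≤ ∑ i ∈ Finset.range m, n i := by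
  classical
  have hYm : Py ^ m ∈ I := by
    rw [hI]; exact Ideal.subset_span (Set.mem_insert _ _)
  have hXY : ∀ i, i < m → Px ^ n i * Py ^ i ∈ I := by
    intro i hi
    rw [hI]; exact Ideal.subset_span (Set.mem_insert_of_mem _ ⟨i, hi, rfl⟩)
  set S : Finset ((_ : ℕ) × ℕ) := (Finset.range m).sigma (fun i => Finset.range (n i)) with hS
  set T : Finset (MvPolynomial (Fin 2) ℂ ⧸ I) :=
    S.image (fun p => Ideal.Quotient.mk I (Px ^ p.2 * Py ^ p.1)) with hT
  have key : ∀ a b : ℕ, Ideal.Quotient.mk I (Px ^ a * Py ^ b) ∈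
      Submodule.span ℂ (T : Set (MvPolynomial (Fin 2) ℂ ⧸ I)) := by
    intro a b
    by_cases hb : b < m
    · by_cases ha : a < n b
      · apply Submodule.subset_span
        simp only [hT, Finset.coe_image, Set.mem_image]
        exact ⟨⟨b, a⟩, by simp [hS, Finset.mem_sigma, hb, ha], rfl⟩
      · have hmem : Px ^ a * Py ^ b ∈ I := by
          have h1 : Px ^ a * Py ^ b = Px ^ (a - n b) * (Px ^ n b * Py ^ b) := by
            rw [← mul_assoc, ← pow_add]
            congr 2
            omega
          rw [h1]
          exact Ideal.mul_mem_left _ _ (hXY b hb)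
        rw [Ideal.Quotient.eq_zero_iff_mem.mpr hmem]
        exact Submodule.zero_mem _
    · have hmem : Px ^ a * Py ^ b ∈ I := by
        have h1 : Px ^ a * Py ^ b = (Px ^ a * Py ^ (b - m)) * Py ^ m := by
          rw [mul_assoc, ← pow_add]; congr 2; omega
        rw [h1]
        exact Ideal.mul_mem_left _ _ hYm
      rw [Ideal.Quotient.eq_zero_iff_mem.mpr hmem]
      exact Submodule.zero_mem _
  have hspan : Submodule.span ℂ (T : Set (MvPolynomial (Fin 2) ℂ ⧸ I)) = ⊤ := by
    rw [Submodule.eq_top_iff']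
    intro q
    obtain ⟨f, rfl⟩ := Ideal.Quotient.mk_surjective q
    induction f using MvPolynomial.induction_on' with
    | monomial d c =>
      have hmon : (monomial d c : MvPolynomial (Fin 2) ℂ) = c • (Px ^ d 0 * Py ^ d 1) := by
        rw [MvPolynomial.monomial_eq, Finsupp.prod_fintype _ _ (fun i => pow_zero _),
          Fin.prod_univ_two]
        rw [MvPolynomial.smul_eq_C_mul]
        show _ = C c * (Px ^ d 0 * Py ^ d 1)
        rfl
      have hsmul : Ideal.Quotient.mk I (monomial d c) =
          c • Ideal.Quotient.mk I (Px ^ d 0 * Py ^ d 1) := by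
        rw [hmon, ← Ideal.Quotient.mkₐ_eq_mk ℂ I, map_smul]
      rw [hsmul]
      exact Submodule.smul_mem _ _ (key _ _)
    | add p q hp hq =>
      rw [map_add]
      exact Submodule.add_mem _ hp hq
  have hfin : FiniteDimensional ℂ (MvPolynomial (Fin 2) ℂ ⧸ I) := ⟨⟨T, hspan⟩⟩
  refine ⟨hfin, ?_⟩
  calc Module.finrank ℂ (MvPolynomial (Fin 2) ℂ ⧸ I)
      = Module.finrank ℂ (Submodule.span ℂ (T : Set (MvPolynomial (Fin 2) ℂ ⧸ I))) := by
        rw [hspan, finrank_top]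
    _ ≤ T.card := finrank_span_finset_le_card T
    _ ≤ S.card := Finset.card_image_le
    _ = ∑ i ∈ Finset.range m, n i := by simp [hS, Finset.card_sigma]
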